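/- For any linear map F on a 3-dimensional inner product space, the cofactor F^c := [F² - (tr F) F + (1/2)((tr F)² - tr(F²)) 1]ᵀ satisfies F^c (u × v) = (F u) × (F v) for all vectors u, v, where × is the cross product in ℝ³. -/

import Mathlib

/-- The cross product on `EuclideanSpace ℝ (Fin 3)`, transported from `Fin 3 → ℝ`. -/
noncomputable def cross3 (u v : EuclideanSpace ℝ (Fin 3)) : EuclideanSpace ℝ (Fin 3) :=
  (WithLp.equiv 2 (Fin 3 → ℝ)).symm
    (crossProduct ((WithLp.equiv 2 (Fin 3 → ℝ)) u) ((WithLp.equiv 2 (Fin 3 → ℝ)) v))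

lemma key3 (A : Matrix (Fin 3) (Fin 3) ℝ) (u v : Fin 3 → ℝ) :
    Matrix.mulVec (Matrix.transpose (A*A - A.trace • A +
      ((1/2 : ℝ) * (A.trace^2 - (A*A).trace) ) • (1 : Matrix (Fin 3) (Fin 3) ℝ)))
      (crossProduct u v) = crossProduct (Matrix.mulVec A u) (Matrix.mulVec A v) := by
  funext i
  fin_cases i <;>
    simp [Matrix.mulVec, Matrix.mul_apply, crossProduct, Matrix.trace, Matrix.diag,
      dotProduct, Fin.sum_univ_three, Matrix.one_apply, Matrix.transpose_apply] <;>
    ring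

/-- For any linear map `F` on a 3-dimensional inner product space, the
cofactor `F^c := [F² - (tr F) F + (1/2)((tr F)² - tr(F²)) 1]ᵀ` satisfies
`F^c (u × v) = (F u) × (F v)` for all `u, v`. -/
theorem statement11
    (F : EuclideanSpace ℝ (Fin 3) →ₗ[ℝ] EuclideanSpace ℝ (Fin 3)) :
    ∀ u v : EuclideanSpace ℝ (Fin 3),
      (LinearMap.adjoint
          (F ∘ₗ F - LinearMap.trace ℝ _ F • F +
            ((1 / 2 : ℝ) * ((LinearMap.trace ℝ _ F) ^ 2 - LinearMap.trace ℝ _ (F ∘ₗ F))) •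
              (LinearMap.id : EuclideanSpace ℝ (Fin 3) →ₗ[ℝ] EuclideanSpace ℝ (Fin 3))))
          (cross3 u v)
        = cross3 (F u) (F v) := by
  intro u v
  set A : Matrix (Fin 3) (Fin 3) ℝ := Matrix.toEuclideanLin.symm F with hA
  have hF : F = Matrix.toEuclideanLin A := by simp [hA]
  have htoLin : (Matrix.toEuclideanLin : Matrix (Fin 3) (Fin 3) ℝ ≃ₗ[ℝ] _) =
      Matrix.toLin (EuclideanSpace.basisFun (Fin 3) ℝ).toBasis
        (EuclideanSpace.basisFun (Fin 3) ℝ).toBasis :=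
    Matrix.toEuclideanLin_eq_toLin_orthonormal
  have hcomp : F ∘ₗ F = Matrix.toEuclideanLin (A * A) := by
    rw [hF, htoLin]; exact (Matrix.toLin_mul _ _ _ A A).symm
  have htr : LinearMap.trace ℝ _ F = A.trace := by
    rw [hF, htoLin,
      LinearMap.trace_eq_matrix_trace ℝ (EuclideanSpace.basisFun (Fin 3) ℝ).toBasis,
      LinearMap.toMatrix_toLin]
  have htr2 : LinearMap.trace ℝ _ (F ∘ₗ F) = (A * A).trace := by
    rw [hcomp, htoLin,
      LinearMap.trace_eq_matrix_trace ℝ (EuclideanSpace.basisFun (Fin 3) ℝ).toBasis,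
      LinearMap.toMatrix_toLin]
  have hid : (LinearMap.id : EuclideanSpace ℝ (Fin 3) →ₗ[ℝ] EuclideanSpace ℝ (Fin 3)) =
      Matrix.toEuclideanLin 1 := by
    rw [htoLin, Matrix.toLin_one]
  have hsum : F ∘ₗ F - LinearMap.trace ℝ _ F • F +
      ((1 / 2 : ℝ) * ((LinearMap.trace ℝ _ F) ^ 2 - LinearMap.trace ℝ _ (F ∘ₗ F))) •
        (LinearMap.id : EuclideanSpace ℝ (Fin 3) →ₗ[ℝ] EuclideanSpace ℝ (Fin 3)) =
      Matrix.toEuclideanLin (A * A - A.trace • A +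
        ((1/2 : ℝ) * (A.trace^2 - (A*A).trace)) • (1 : Matrix (Fin 3) (Fin 3) ℝ)) := by
    rw [htr, htr2, hcomp, hid, hF, map_add, map_sub, map_smul, map_smul]
  rw [hsum, ← Matrix.toEuclideanLin_conjTranspose_eq_adjoint]
  have hct : ∀ B : Matrix (Fin 3) (Fin 3) ℝ, B.conjTranspose = B.transpose := by
    intro B; ext i j; simp [Matrix.conjTranspose_apply]
  rw [hct, hF]
  simp only [cross3, Matrix.toEuclideanLin_apply, Equiv.apply_symm_apply,
    EmbeddingLike.apply_eq_iff_eq]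
  simp only [WithLp.equiv_apply, WithLp.equiv_symm_apply, WithLp.ofLp_toLp]
  exact congrArg _ (key3 A _ _)
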